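/- Let a, b be coefficient sequences with b₀ ≠ 0, so that b is invertible in the ψ-ring of Ward, and let b⁻¹ denote its inverse with respect to the Ward product. Then the ψ-derivative of the quotient satisfies the quotient ψ-rule: D(a·b⁻¹) = (D a − (a·b⁻¹) ∗_{1,0} D b)·b⁻¹. -/

import Mathlib

open Finset

/-- The ψ-factorial: ψₙ! = ψ₁ψ₂⋯ψₙ, with ψ₀! = 1. -/
noncomputable def psiFact (ψ : ℕ → ℂ) : ℕ → ℂ
  | 0 => 1
  | n + 1 => psiFact ψ n * ψ (n + 1)

/-- The ψ-binomial coefficient binomψ(n,k) = ψₙ!/(ψₖ!·ψ_{n−k}!). -/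
noncomputable def psiBinom (ψ : ℕ → ℂ) (n k : ℕ) : ℂ :=
  psiFact ψ n / (psiFact ψ k * psiFact ψ (n - k))

/-- The Fontané numbers F(n,k) = (ψₙ − ψₖ)/ψ_{n−k}. -/
noncomputable def Fker (ψ : ℕ → ℂ) (n k : ℕ) : ℂ :=
  (ψ n - ψ k) / ψ (n - k)

/-- The Ward product of coefficient sequences. -/
noncomputable def wardMul (ψ : ℕ → ℂ) (a b : ℕ → ℂ) (n : ℕ) : ℂ :=
  ∑ k ∈ Finset.range (n + 1), psiBinom ψ n k * a k * b (n - k)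

/-- The Fontané product ∗_{i,j} of coefficient sequences. -/
noncomputable def fontane (ψ : ℕ → ℂ) (i j : ℕ) (a b : ℕ → ℂ) (n : ℕ) : ℂ :=
  ∑ k ∈ Finset.range (n + 1), Fker ψ (n + i) (k + j) * psiBinom ψ n k * a k * b (n - k)

/-- The ψ-derivative on coefficient sequences: the shift (D a)ₙ = a_{n+1}. -/
def Dpsi (a : ℕ → ℂ) (n : ℕ) : ℂ := a (n + 1)

lemma psiFact_ne_zero (ψ : ℕ → ℂ) (hψ : ∀ n : ℕ, 1 ≤ n → ψ n ≠ 0) :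
    ∀ n, psiFact ψ n ≠ 0
  | 0 => one_ne_zero
  | n + 1 => mul_ne_zero (psiFact_ne_zero ψ hψ n) (hψ _ (Nat.succ_le_succ (Nat.zero_le n)))

lemma psiBinom_self (ψ : ℕ → ℂ) (hψ : ∀ n : ℕ, 1 ≤ n → ψ n ≠ 0) (n : ℕ) :
    psiBinom ψ n n = 1 := by
  simp [psiBinom, Nat.sub_self, psiFact, div_self (psiFact_ne_zero ψ hψ n)]

lemma psiBinom_zero (ψ : ℕ → ℂ) (hψ : ∀ n : ℕ, 1 ≤ n → ψ n ≠ 0) (n : ℕ) :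
    psiBinom ψ n 0 = 1 := by
  simp [psiBinom, psiFact, div_self (psiFact_ne_zero ψ hψ n)]

lemma psiBinom_symm (ψ : ℕ → ℂ) {k n : ℕ} (hk : k ≤ n) :
    psiBinom ψ n (n - k) = psiBinom ψ n k := by
  simp [psiBinom, Nat.sub_sub_self hk, mul_comm]

lemma psiBinom_tri (ψ : ℕ → ℂ) (hψ : ∀ n : ℕ, 1 ≤ n → ψ n ≠ 0)
    {j k n : ℕ} (hj : j ≤ k) (hk : k ≤ n) :
    psiBinom ψ n k * psiBinom ψ k j = psiBinom ψ n j * psiBinom ψ (n - j) (k - j) := by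
  have h1 : n - j - (k - j) = n - k := by omega
  simp only [psiBinom, h1]
  have f0 := psiFact_ne_zero ψ hψ
  rw [div_mul_div_comm, div_mul_div_comm, div_eq_div_iff
    (mul_ne_zero (mul_ne_zero (f0 k) (f0 (n - k))) (mul_ne_zero (f0 j) (f0 (k - j))))
    (mul_ne_zero (mul_ne_zero (f0 j) (f0 (n - j))) (mul_ne_zero (f0 (k - j)) (f0 (n - k))))]
  ring

lemma wardMul_comm (ψ : ℕ → ℂ) (a b : ℕ → ℂ) :
    wardMul ψ a b = wardMul ψ b a := by
  funext n
  simp only [wardMul]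
  rw [← Finset.sum_range_reflect (fun k => psiBinom ψ n k * b k * a (n - k)) (n + 1)]
  apply Finset.sum_congr rfl
  intro k hk
  have hk' : k ≤ n := Nat.lt_succ_iff.mp (mem_range.mp hk)
  have h1 : n + 1 - 1 - k = n - k := by omega
  rw [h1, psiBinom_symm ψ hk', Nat.sub_sub_self hk']
  ring

lemma wardMul_delta_right (ψ : ℕ → ℂ) (hψ : ∀ n : ℕ, 1 ≤ n → ψ n ≠ 0) (a : ℕ → ℂ) :
    wardMul ψ a (fun n => if n = 0 then 1 else 0) = a := by
  funext n
  simp only [wardMul]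
  rw [Finset.sum_eq_single n]
  · simp [Nat.sub_self, psiBinom_self ψ hψ]
  · intro k hk hne
    have hk' : k ≤ n := Nat.lt_succ_iff.mp (mem_range.mp hk)
    have : n - k ≠ 0 := by omega
    simp [this]
  · intro h; exact absurd (self_mem_range_succ n) h

lemma wardMul_assoc (ψ : ℕ → ℂ) (hψ : ∀ n : ℕ, 1 ≤ n → ψ n ≠ 0) (a b c : ℕ → ℂ) :
    wardMul ψ (wardMul ψ a b) c = wardMul ψ a (wardMul ψ b c) := by
  funext n
  simp only [wardMul, Finset.sum_mul, Finset.mul_sum]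
  -- LHS: ∑ k ∑ j, B n k * (B k j * a j * b (k-j)) * c (n-k)
  -- RHS: ∑ j ∑ m, B n j * a j * (B (n-j) m * b m * c (n-j-m))
  have step1 : ∀ k ∈ Finset.range (n + 1),
      (∑ j ∈ Finset.range (k + 1),
        psiBinom ψ n k * (psiBinom ψ k j * a j * b (k - j)) * c (n - k))
      = ∑ j ∈ Finset.range (n + 1),
          (if j ≤ k then psiBinom ψ n k * (psiBinom ψ k j * a j * b (k - j)) * c (n - k)
           else 0) := by
    intro k hk
    have hk' : k ≤ n := Nat.lt_succ_iff.mp (mem_range.mp hk)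
    rw [Finset.sum_ite, Finset.sum_const_zero, add_zero]
    apply Finset.sum_congr _ (fun _ _ => rfl)
    ext j
    simp only [Finset.mem_filter, Finset.mem_range]
    omega
  rw [Finset.sum_congr rfl step1, Finset.sum_comm]
  apply Finset.sum_congr rfl
  intro j hj
  have hj' : j ≤ n := Nat.lt_succ_iff.mp (mem_range.mp hj)
  rw [Finset.sum_ite, Finset.sum_const_zero, add_zero]
  have hfil : (Finset.range (n + 1)).filter (fun k => j ≤ k) = Finset.Ico j (n + 1) := by
    ext k; simp only [Finset.mem_filter, Finset.mem_range, Finset.mem_Ico]; omega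
  rw [hfil, Finset.sum_Ico_eq_sum_range]
  have hrange : n + 1 - j = (n - j) + 1 := by omega
  rw [hrange]
  apply Finset.sum_congr rfl
  intro m hm
  have hm' : m ≤ n - j := Nat.lt_succ_iff.mp (mem_range.mp hm)
  have h1 : j + m - j = m := by omega
  have h2 : n - (j + m) = n - j - m := by omega
  have htri := psiBinom_tri ψ hψ (j := j) (k := j + m) (n := n)
    (Nat.le_add_right j m) (by omega)
  rw [h1] at htri
  rw [h2, h1]
  calc psiBinom ψ n (j + m) * (psiBinom ψ (j + m) j * a j * b m) * c (n - j - m)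
      = (psiBinom ψ n (j + m) * psiBinom ψ (j + m) j) * a j * b m * c (n - j - m) := by ring
    _ = (psiBinom ψ n j * psiBinom ψ (n - j) m) * a j * b m * c (n - j - m) := by rw [htri]
    _ = psiBinom ψ n j * a j * (psiBinom ψ (n - j) m * b m * c (n - j - m)) := by ring

lemma psiBinom_pascal (ψ : ℕ → ℂ) (hψ0 : ψ 0 = 0) (hψ : ∀ n : ℕ, 1 ≤ n → ψ n ≠ 0)
    {k n : ℕ} (hk : k ≤ n) :
    psiBinom ψ (n + 1) (k + 1)
      = psiBinom ψ n k + Fker ψ (n + 1) (k + 1) * psiBinom ψ n (k + 1) := by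
  rcases eq_or_lt_of_le hk with rfl | h
  · have : Fker ψ (k + 1) (k + 1) = 0 := by simp [Fker]
    rw [this, zero_mul, add_zero, psiBinom_self ψ hψ, psiBinom_self ψ hψ]
  · -- k < n
    have h1 : n + 1 - (k + 1) = n - k := by omega
    have h2 : n - (k + 1) = n - k - 1 := by omega
    have h3 : n - k = (n - k - 1) + 1 := by omega
    simp only [psiBinom, Fker, h1, h2]
    rw [show psiFact ψ (n + 1) = psiFact ψ n * ψ (n + 1) from rfl,
        show psiFact ψ (k + 1) = psiFact ψ k * ψ (k + 1) from rfl,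
        h3, show psiFact ψ ((n - k - 1) + 1) = psiFact ψ (n - k - 1) * ψ (n - k - 1 + 1) from rfl,
        ← h3]
    have f0 := psiFact_ne_zero ψ hψ
    have hnk : ψ (n - k) ≠ 0 := hψ _ (by omega)
    have hk1 : ψ (k + 1) ≠ 0 := hψ _ (by omega)
    have hA : psiFact ψ k * (psiFact ψ (n - k - 1) * ψ (n - k)) ≠ 0 :=
      mul_ne_zero (f0 k) (mul_ne_zero (f0 (n - k - 1)) hnk)
    have hB : ψ (n - k) * (psiFact ψ k * ψ (k + 1) * psiFact ψ (n - k - 1)) ≠ 0 :=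
      mul_ne_zero hnk (mul_ne_zero (mul_ne_zero (f0 k) hk1) (f0 (n - k - 1)))
    have hC : psiFact ψ k * ψ (k + 1) * (psiFact ψ (n - k - 1) * ψ (n - k)) ≠ 0 :=
      mul_ne_zero (mul_ne_zero (f0 k) hk1) (mul_ne_zero (f0 (n - k - 1)) hnk)
    rw [div_mul_div_comm, div_add_div _ _ hA hB, div_eq_div_iff hC (mul_ne_zero hA hB)]
    ring

lemma Dpsi_wardMul (ψ : ℕ → ℂ) (hψ0 : ψ 0 = 0) (hψ : ∀ n : ℕ, 1 ≤ n → ψ n ≠ 0)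
    (u v : ℕ → ℂ) (n : ℕ) :
    Dpsi (wardMul ψ u v) n
      = wardMul ψ (Dpsi u) v n + fontane ψ 1 0 u (Dpsi v) n := by
  simp only [Dpsi, wardMul, fontane, Nat.add_zero]
  rw [Finset.sum_range_succ' (fun k => psiBinom ψ (n + 1) k * u k * v (n + 1 - k)) (n + 1)]
  rw [Finset.sum_range_succ'
    (fun k => Fker ψ (n + 1) k * psiBinom ψ n k * u k * v (n - k + 1)) n]
  simp only [Nat.sub_zero]
  have hF0 : Fker ψ (n + 1) 0 = 1 := by
    simp [Fker, hψ0, div_self (hψ (n + 1) (by omega))]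
  have hpad : (∑ k ∈ Finset.range n,
        Fker ψ (n + 1) (k + 1) * psiBinom ψ n (k + 1) * u (k + 1) * v (n - (k + 1) + 1))
      = ∑ k ∈ Finset.range (n + 1),
        Fker ψ (n + 1) (k + 1) * psiBinom ψ n (k + 1) * u (k + 1) * v (n - k) := by
    rw [Finset.sum_range_succ]
    have hz : Fker ψ (n + 1) (n + 1) = 0 := by simp [Fker]
    rw [hz, zero_mul, zero_mul, zero_mul, add_zero]
    apply Finset.sum_congr rfl
    intro k hk
    have hk' : k < n := mem_range.mp hk
    rw [show n - (k + 1) + 1 = n - k from by omega]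
  rw [hpad, hF0, psiBinom_zero ψ hψ, psiBinom_zero ψ hψ]
  have hmain : (∑ k ∈ Finset.range (n + 1),
        psiBinom ψ (n + 1) (k + 1) * u (k + 1) * v (n + 1 - (k + 1)))
      = (∑ k ∈ Finset.range (n + 1), psiBinom ψ n k * u (k + 1) * v (n - k))
        + ∑ k ∈ Finset.range (n + 1),
            Fker ψ (n + 1) (k + 1) * psiBinom ψ n (k + 1) * u (k + 1) * v (n - k) := by
    rw [← Finset.sum_add_distrib]
    apply Finset.sum_congr rfl
    intro k hk
    have hk' : k ≤ n := Nat.lt_succ_iff.mp (mem_range.mp hk)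
    rw [show n + 1 - (k + 1) = n - k from by omega,
        psiBinom_pascal ψ hψ0 hψ hk']
    ring
  rw [hmain]
  ring

/-- The quotient ψ-rule: D(a·b⁻¹) = (D a − (a·b⁻¹) ∗_{1,0} D b)·b⁻¹. -/
theorem Dpsi_quotient (ψ : ℕ → ℂ) (hψ0 : ψ 0 = 0) (hψ1 : ψ 1 = 1) (hψ : ∀ n : ℕ, 1 ≤ n → ψ n ≠ 0)
    (a b binv : ℕ → ℂ) (hb : b 0 ≠ 0)
    (hinv : wardMul ψ b binv = fun n => if n = 0 then 1 else 0) :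
    Dpsi (wardMul ψ a binv)
      = wardMul ψ
          (fun n => Dpsi a n - fontane ψ 1 0 (wardMul ψ a binv) (Dpsi b) n) binv := by
  set c := wardMul ψ a binv with hc
  have hcb : wardMul ψ c b = a := by
    rw [hc, wardMul_assoc ψ hψ, wardMul_comm ψ binv b, hinv, wardMul_delta_right ψ hψ]
  have hkey : (fun n => Dpsi a n - fontane ψ 1 0 c (Dpsi b) n) = wardMul ψ (Dpsi c) b := by
    funext n
    have := Dpsi_wardMul ψ hψ0 hψ c b n
    rw [hcb] at this
    rw [this]
    ring
  rw [hkey, wardMul_assoc ψ hψ, hinv, wardMul_delta_right ψ hψ]
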